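/- Let f : ℝ^n → ℝ be differentiable and convex, and let 𝒰 : [0, ∞) → [0, ∞) be increasing with 𝒰(0) = 0 such that f is U-convex with U(u) = 𝒰(‖u‖₂). Let λ > 0 and (β, θ) ∈ ℝ^p × ℝ^n with Ω(β) and Ω*(X^⊤θ) finite, and suppose the supremum defining f*(−λθ) is attained at z₀ ∈ ℝ^n. Then 𝒰(‖Xβ − z₀‖₂) ≤ Gap_λ(β, θ) and f(Xβ) − f(z₀) ≤ ‖∇f(Xβ)‖₂ · ‖Xβ − z₀‖₂. -/

import Mathlib

open scoped RealInnerProductSpace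

noncomputable section

abbrev Vec (d : ℕ) := EuclideanSpace ℝ (Fin d)

/-- Matrix–vector product, landing in Euclidean space. -/
def mv {a b : ℕ} (M : Matrix (Fin a) (Fin b) ℝ) (v : Vec b) : Vec a := WithLp.toLp 2 (M.mulVec v)

/-- Fenchel conjugate of a real-valued function, with values in `EReal`. -/
noncomputable def rconj {d : ℕ} (f : Vec d → ℝ) (u : Vec d) : EReal :=
  ⨆ x, ((⟪u, x⟫ - f x : ℝ) : EReal)

/-- Fenchel conjugate of an `EReal`-valued function. -/
noncomputable def econj {d : ℕ} (g : Vec d → EReal) (u : Vec d) : EReal :=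
  ⨆ x, (((⟪u, x⟫ : ℝ) : EReal) - g x)

/-- uniform convexity controls the distance to the dual optimum.
`f` is differentiable and convex, `𝒰 : [0,∞) → [0,∞)` is increasing with `𝒰(0) = 0`,
and `f` is `U`-convex with `U(u) = 𝒰(‖u‖₂)`.  With `Ω(β) = Ωβ`, `Ω*(Xᵀθ) = Ωs`
finite and the supremum defining `f*(-λθ)` attained at `z₀`
(`Gap_λ(β,θ) = f(Xβ) + (⟪-λθ, z₀⟫ - f z₀) + λ(Ωβ + Ωs)`):
`𝒰(‖Xβ - z₀‖₂) ≤ Gap_λ(β,θ)` and `f(Xβ) - f(z₀) ≤ ‖∇f(Xβ)‖₂ ‖Xβ - z₀‖₂`. -/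
theorem stmt10 {n p : ℕ} (X : Matrix (Fin n) (Fin p) ℝ)
    (f : Vec n → ℝ) (f' : Vec n → Vec n)
    (hdiff : ∀ x, HasGradientAt f (f' x) x)
    (hconv : ConvexOn ℝ Set.univ f)
    (𝒰 : ℝ → ℝ) (hmono : MonotoneOn 𝒰 (Set.Ici 0)) (h𝒰0 : 𝒰 0 = 0)
    (h𝒰nn : ∀ t, 0 ≤ t → 0 ≤ 𝒰 t)
    (hU : ∀ x z : Vec n, 𝒰 ‖z - x‖ ≤ f z - f x - ⟪f' x, z - x⟫)
    (Ω : Vec p → EReal)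
    (lam : ℝ) (hlam : 0 < lam)
    (β : Vec p) (θ : Vec n)
    (Ωβ Ωs : ℝ)
    (hΩβ : Ω β = (Ωβ : EReal))
    (hΩs : econj Ω (mv X.transpose θ) = (Ωs : EReal))
    (z₀ : Vec n)
    (hatt : rconj f ((-lam) • θ) = ((⟪(-lam) • θ, z₀⟫ - f z₀ : ℝ) : EReal)) :
    𝒰 ‖mv X β - z₀‖ ≤
        f (mv X β) + (⟪(-lam) • θ, z₀⟫ - f z₀) + lam * (Ωβ + Ωs) ∧
    f (mv X β) - f z₀ ≤ ‖f' (mv X β)‖ * ‖mv X β - z₀‖ := by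
  set c : Vec n := (-lam) • θ with hc
  -- the sup attained at z₀ means z₀ maximizes z ↦ ⟪c,z⟫ - f z
  have hmax : ∀ z, ⟪c, z⟫ - f z ≤ ⟪c, z₀⟫ - f z₀ := by
    intro z
    have h1 : ((⟪c, z⟫ - f z : ℝ) : EReal) ≤ rconj f c := by unfold rconj; exact le_iSup (fun x : Vec n => ((⟪c, x⟫ - f x : ℝ) : EReal)) z
    rw [hatt] at h1
    exact_mod_cast h1
  -- hence f' z₀ = c
  have hgrad : f' z₀ = c := by
    have hloc : IsLocalMax (fun z => ⟪c, z⟫ - f z) z₀ :=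
      IsMaxOn.isLocalMax (fun z _ => hmax z) Filter.univ_mem
    have h1 : HasFDerivAt (fun z : Vec n => ⟪c, z⟫)
        (InnerProductSpace.toDual ℝ (Vec n) c : Vec n →L[ℝ] ℝ) z₀ := by
      exact (InnerProductSpace.toDual ℝ (Vec n) c).hasFDerivAt (x := z₀)
    have hF : HasFDerivAt (fun z => ⟪c, z⟫ - f z)
        ((InnerProductSpace.toDual ℝ (Vec n) c : Vec n →L[ℝ] ℝ)
          - (InnerProductSpace.toDual ℝ (Vec n) (f' z₀))) z₀ :=
      h1.sub (hdiff z₀).hasFDerivAt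
    have h0 := hloc.hasFDerivAt_eq_zero hF
    have h2 : (InnerProductSpace.toDual ℝ (Vec n) (f' z₀))
        = InnerProductSpace.toDual ℝ (Vec n) c := by
      rw [sub_eq_zero] at h0; exact h0.symm
    exact (InnerProductSpace.toDual ℝ (Vec n)).injective h2
  -- Fenchel-Young for Ω
  have hadj : ⟪mv X.transpose θ, β⟫ = ⟪θ, mv X β⟫ := by
    simp only [mv, PiLp.inner_apply, RCLike.inner_apply, conj_trivial,
      PiLp.toLp_apply, Matrix.mulVec, dotProduct, Matrix.transpose_apply, Finset.sum_mul, Finset.mul_sum]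
    rw [Finset.sum_comm]
    congr 1; ext i; congr 1; ext j; ring
  have hFY : ⟪θ, mv X β⟫ ≤ Ωβ + Ωs := by
    have h1 : (((⟪mv X.transpose θ, β⟫ : ℝ) : EReal) - Ω β)
        ≤ econj Ω (mv X.transpose θ) := by unfold econj; exact le_iSup (fun x : Vec p => (((⟪mv X.transpose θ, x⟫ : ℝ) : EReal) - Ω x)) β
    rw [hΩs, hΩβ, hadj, ← EReal.coe_sub] at h1
    have h2 : ⟪θ, mv X β⟫ - Ωβ ≤ Ωs := by exact_mod_cast h1
    linarith
  -- first inequality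
  have hU1 := hU z₀ (mv X β)
  rw [hgrad] at hU1
  have hcin : ⟪c, mv X β - z₀⟫ = -lam * ⟪θ, mv X β⟫ + lam * ⟪θ, z₀⟫ := by
    rw [hc, inner_smul_left, inner_sub_right]
    simp; ring
  have hcz : ⟪c, z₀⟫ = -lam * ⟪θ, z₀⟫ := by
    rw [hc, inner_smul_left]; simp
  constructor
  · rw [hcz]
    rw [hcin] at hU1
    have hmul : lam * ⟪θ, mv X β⟫ ≤ lam * (Ωβ + Ωs) :=
      mul_le_mul_of_nonneg_left hFY (le_of_lt hlam)
    nlinarith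
  · -- second inequality
    have hU2 := hU (mv X β) z₀
    have hnn : (0:ℝ) ≤ 𝒰 ‖z₀ - mv X β‖ := h𝒰nn _ (norm_nonneg _)
    have hcs : ⟪f' (mv X β), mv X β - z₀⟫ ≤ ‖f' (mv X β)‖ * ‖mv X β - z₀‖ :=
      real_inner_le_norm _ _
    have h3 : ⟪f' (mv X β), z₀ - mv X β⟫ = -⟪f' (mv X β), mv X β - z₀⟫ := by
      rw [← inner_neg_right]; congr 1; abel
    rw [h3] at hU2
    linarith

end
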